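/- If I is a κ-complete ideal over an uncountable cardinal κ containing all singletons such that the quotient Boolean algebra P(κ)/I is complete, and I is not λ-saturated for some cardinal λ (i.e., there exists an antichain with respect to I of size λ), then 2^λ ≤ 2^κ. -/

import Mathlib

universe u

/-- A proper, κ-complete ideal on `P(κ)` (κ realized as the type `α`)
containing all singletons. -/
structure IdealOver (α : Type u) where
  carrier : Set (Set α)
  proper : Set.univ ∉ carrier
  downward : ∀ {A B : Set α}, A ⊆ B → B ∈ carrier → A ∈ carrier
  singleton_mem : ∀ x : α, {x} ∈ carrier
  complete : ∀ s : Set (Set α), Cardinal.mk ↥s < Cardinal.mk α → s ⊆ carrier →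
    ⋃₀ s ∈ carrier

/-- `𝒜` is an antichain with respect to `I`: a family of I-positive sets whose
pairwise intersections lie in `I`. -/
def IsAntichainFor {α : Type u} (I : IdealOver α) (𝒜 : Set (Set α)) : Prop :=
  (∀ A ∈ 𝒜, A ∉ I.carrier) ∧ ∀ A ∈ 𝒜, ∀ B ∈ 𝒜, A ≠ B → A ∩ B ∈ I.carrier

/-- `[Z]` is a least upper bound of `{[A] : A ∈ F}` in `P(α)/I`, where
`[A] ≤ [B]` iff `A \ B ∈ I`. -/
def IsSupFor {α : Type u} (I : IdealOver α) (F : Set (Set α)) (Z : Set α) : Prop :=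
  (∀ A ∈ F, A \ Z ∈ I.carrier) ∧
    ∀ W : Set α, (∀ A ∈ F, A \ W ∈ I.carrier) → Z \ W ∈ I.carrier

/-- The quotient Boolean algebra `P(α)/I` is complete: every family of classes
has a least upper bound. -/
def QuotComplete {α : Type u} (I : IdealOver α) : Prop :=
  ∀ F : Set (Set α), ∃ Z : Set α, IsSupFor I F Z

/-- Auxiliary: an ideal over an uncountable cardinal is closed under binary unions. -/
theorem IdealOver.union_mem {α : Type u} (I : IdealOver α)
    (huncount : Cardinal.aleph0 < Cardinal.mk α)
    {A B : Set α} (hA : A ∈ I.carrier) (hB : B ∈ I.carrier) :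
    A ∪ B ∈ I.carrier := by
  have h := I.complete {A, B}
    (lt_trans (((Set.finite_singleton B).insert A).lt_aleph0) huncount)
    (by intro C hC; rcases hC with rfl | rfl <;> assumption)
  simpa using h

/-- if the quotient of a κ-complete ideal over an uncountable κ is
complete and there is an antichain of size λ, then `2^λ ≤ 2^κ`. -/
theorem stmt0 {α : Type u} (I : IdealOver α)
    (huncount : Cardinal.aleph0 < Cardinal.mk α)
    (hcomp : QuotComplete I)
    (lam : Cardinal.{u}) (𝒜 : Set (Set α))
    (hanti : IsAntichainFor I 𝒜) (hcard : Cardinal.mk ↥𝒜 = lam) :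
    (2 : Cardinal.{u}) ^ lam ≤ (2 : Cardinal.{u}) ^ Cardinal.mk α := by
  subst hcard
  choose Z hZ using hcomp
  set g : Set ↥𝒜 → Set α := fun S => Z (Subtype.val '' S) with hg
  -- key claim
  have key : ∀ S T : Set ↥𝒜, ∀ a : ↥𝒜, a ∈ S → a ∉ T → g S ≠ g T := by
    intro S T a haS haT heq
    have hA𝒜 : (a : Set α) ∈ 𝒜 := a.2
    have hAS : (a : Set α) ∈ Subtype.val '' S := ⟨a, haS, rfl⟩
    have hAnT : (a : Set α) ∉ Subtype.val '' T := by
      rintro ⟨b, hbT, hb⟩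
      exact haT (by rwa [Subtype.val_injective hb] at hbT)
    -- A \ g S ∈ I
    have h1 : (a : Set α) \ g S ∈ I.carrier := (hZ (Subtype.val '' S)).1 _ hAS
    -- g T ∩ A ∈ I
    have h2 : g T \ (g T \ (a : Set α)) ∈ I.carrier := by
      apply (hZ (Subtype.val '' T)).2
      intro B hB
      have hB𝒜 : B ∈ 𝒜 := by rcases hB with ⟨b, _, rfl⟩; exact b.2
      have hne : B ≠ (a : Set α) := by rintro rfl; exact hAnT hB
      have hint : B ∩ (a : Set α) ∈ I.carrier := hanti.2 B hB𝒜 _ hA𝒜 hne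
      have hdiff : B \ Z (Subtype.val '' T) ∈ I.carrier := (hZ (Subtype.val '' T)).1 _ hB
      refine I.downward ?_ (I.union_mem huncount hdiff hint)
      intro x hx
      by_cases hxz : x ∈ Z (Subtype.val '' T)
      · right; exact ⟨hx.1, by by_contra h; exact hx.2 ⟨hxz, h⟩⟩
      · left; exact ⟨hx.1, hxz⟩
    have h2' : g T ∩ (a : Set α) ∈ I.carrier := by
      refine I.downward ?_ h2
      intro x hx; exact ⟨hx.1, fun h => h.2 hx.2⟩
    have : (a : Set α) ∈ I.carrier := by
      refine I.downward ?_ (I.union_mem huncount h1 h2')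
      intro x hx
      by_cases hxz : x ∈ g S
      · right; exact ⟨heq ▸ hxz, hx⟩
      · left; exact ⟨hx, hxz⟩
    exact hanti.1 _ hA𝒜 this
  have hinj : Function.Injective g := by
    intro S T heq
    by_contra hne
    rcases Set.not_subset.1 (fun hST => hne (Set.Subset.antisymm hST (fun a haT => by
      by_contra haS
      exact key T S a haT haS heq.symm))) with ⟨a, haS, haT⟩
    exact key S T a haS haT heq
  have := Cardinal.mk_le_of_injective hinj
  simpa [Cardinal.mk_set] using this
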